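/- arXiv:math/0511512 — 2 statements merged into one kernel-verified Lean document; each statement's English description precedes it below -/
import Mathlib

section
/- For all a, b ∈ U₁ and every t ≥ 0, the covariance of W_c(t) is given by E[⟨a, W_c(t)⟩_{U₁} · ⟨b, W_c(t)⟩_{U₁}] = t · ∑_{j=1}^{∞} ⟨a, J g_j⟩_{U₁} ⟨b, J g_j⟩_{U₁} = t · ⟨(J ∘ J*) a, b⟩_{U₁}, where J* : U₁ → U₀ is the Hilbert-space adjoint of J; in particular the covariance operator of W_c(1) is Q₁ = J ∘ J*. -/
open MeasureTheory ProbabilityTheory Filter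
open scoped RealInnerProductSpace NNReal Topology

/-- An independent family of standard real-valued Brownian motions started at `0`:
each `β j` is a measurable process starting at `0`, with Gaussian increments
`β j t - β j s ~ N(0, t - s)`, independent increments, continuous paths, and the
processes `β j`, `j ∈ ℕ`, are mutually independent. -/
structure IsBMFamily {Ω : Type*} [MeasurableSpace Ω] (P : Measure Ω)
    (β : ℕ → ℝ → Ω → ℝ) : Prop where
  meas : ∀ j t, Measurable (β j t)
  start : ∀ j ω, β j 0 ω = 0
  incr_law : ∀ j s t, 0 ≤ s → s ≤ t →
    P.map (fun ω => β j t ω - β j s ω) = gaussianReal 0 (t - s).toNNReal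
  indep_incr : ∀ j (n : ℕ) (t : Fin (n + 1) → ℝ), Monotone t →
    iIndepFun
      (fun i : Fin n => fun ω => β j (t i.succ) ω - β j (t i.castSucc) ω) P
  cont : ∀ j ω, Continuous fun t => β j t ω
  indep : iIndepFun (fun j => fun ω => fun t => β j t ω) P

section GaussAux
open MeasureTheory ProbabilityTheory Filter Real Set
open scoped NNReal ENNReal

lemma integral_sq_exp_Ioi {b : ℝ} (hb : 0 < b) :
    ∫ x in Ioi (0:ℝ), x ^ 2 * rexp (-b * x ^ 2) = (1 / b) ^ ((3:ℝ)/2) * Real.sqrt π / 4 := by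
  have h := integral_comp_rpow_Ioi_of_pos
    (g := fun y => ((1:ℝ)/2) * (y ^ ((1:ℝ)/2) * rexp (-(b * y)))) (p := 2) (by norm_num)
  have h2 : ∫ x in Ioi (0:ℝ), (2 * x ^ ((2:ℝ) - 1)) •
      (((1:ℝ)/2) * ((x ^ (2:ℝ)) ^ ((1:ℝ)/2) * rexp (-(b * x ^ (2:ℝ)))))
      = ∫ x in Ioi (0:ℝ), x ^ 2 * rexp (-b * x ^ 2) := by
    refine setIntegral_congr_fun measurableSet_Ioi (fun x hx => ?_)
    have hx0 : (0:ℝ) < x := hx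
    have e1 : x ^ ((2:ℝ) - 1) = x := by norm_num
    have e2 : (x ^ (2:ℝ)) ^ ((1:ℝ)/2) = x := by
      rw [← Real.rpow_mul hx0.le]
      norm_num
    have e3 : x ^ (2:ℝ) = x ^ 2 := by
      rw [show ((2:ℝ) = ((2:ℕ):ℝ)) by norm_num, Real.rpow_natCast]
    rw [e1, e2, e3]
    simp only [smul_eq_mul]
    ring
  rw [h2] at h
  rw [h]
  have h3 : ∫ y in Ioi (0:ℝ), ((1:ℝ)/2) * (y ^ ((1:ℝ)/2) * rexp (-(b * y)))
      = ((1:ℝ)/2) * ∫ y in Ioi (0:ℝ), y ^ ((3:ℝ)/2 - 1) * rexp (-(b * y)) := by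
    rw [← integral_const_mul]
    norm_num
  rw [h3, integral_rpow_mul_exp_neg_mul_Ioi (by norm_num) hb]
  have hG : Real.Gamma ((3:ℝ)/2) = Real.sqrt π / 2 := by
    have : ((3:ℝ)/2) = 1/2 + 1 := by norm_num
    rw [this, Real.Gamma_add_one (by norm_num), Real.Gamma_one_half_eq]
    ring
  rw [hG]; ring

lemma integral_sq_exp_full {b : ℝ} (hb : 0 < b) :
    ∫ x : ℝ, x ^ 2 * rexp (-b * x ^ 2) = (1 / b) ^ ((3:ℝ)/2) * Real.sqrt π / 2 := by
  have h : ∫ x : ℝ, x ^ 2 * rexp (-b * x ^ 2)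
      = ∫ x : ℝ, (fun y => y ^ 2 * rexp (-b * y ^ 2)) |x| := by
    congr 1; funext x; simp [sq_abs]
  rw [h, integral_comp_abs (f := fun y => y ^ 2 * rexp (-b * y ^ 2)), integral_sq_exp_Ioi hb]; ring

lemma gauss_pdf_eq (v : ℝ≥0) (x : ℝ) :
    gaussianPDFReal 0 v x = (Real.sqrt (2 * π * v))⁻¹ * rexp (-(2 * (v:ℝ))⁻¹ * x ^ 2) := by
  simp only [gaussianPDFReal, sub_zero]
  congr 1
  ring

lemma gauss_moment2 (v : ℝ≥0) : ∫ x, x ^ 2 ∂(gaussianReal 0 v) = v := by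
  by_cases hv : v = 0
  · rw [hv, gaussianReal_zero_var, integral_dirac]; norm_num
  have hv0 : (0:ℝ) < v := by positivity
  have hs : (0:ℝ) < 2 * v := by positivity
  have hb : (0:ℝ) < (2 * (v:ℝ))⁻¹ := by positivity
  rw [gaussianReal_of_var_ne_zero _ hv]
  have hpdf : (gaussianPDF 0 v) = fun x => ((Real.toNNReal (gaussianPDFReal 0 v x) : ℝ≥0) : ℝ≥0∞) := rfl
  rw [hpdf, integral_withDensity_eq_integral_smul (measurable_gaussianPDFReal 0 v).real_toNNReal]
  have heq : ∀ x : ℝ, (Real.toNNReal (gaussianPDFReal 0 v x)) • (x ^ 2)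
      = (Real.sqrt (2 * π * v))⁻¹ * (x ^ 2 * rexp (-(2 * (v:ℝ))⁻¹ * x ^ 2)) := by
    intro x
    simp only [NNReal.smul_def, smul_eq_mul]
    rw [Real.coe_toNNReal _ (gaussianPDFReal_nonneg _ _ _), gauss_pdf_eq]
    ring
  simp only [heq]
  rw [integral_const_mul, integral_sq_exp_full hb]
  rw [one_div, inv_inv]
  have h32 : (2*(v:ℝ)) ^ ((3:ℝ)/2) = (2*(v:ℝ)) * Real.sqrt (2*v) := by
    rw [show ((3:ℝ)/2) = 1 + 1/2 by norm_num, Real.rpow_add hs, Real.rpow_one,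
      ← Real.sqrt_eq_rpow]
  have hsq : Real.sqrt (2 * π * v) = Real.sqrt π * Real.sqrt (2*v) := by
    rw [← Real.sqrt_mul Real.pi_pos.le]
    congr 1; ring
  rw [h32, hsq]
  have hπ : Real.sqrt π ≠ 0 := by positivity
  have h2v : Real.sqrt (2*(v:ℝ)) ≠ 0 := by positivity
  field_simp

lemma gauss_mean (v : ℝ≥0) : ∫ x, x ∂(gaussianReal 0 v) = 0 := by
  have hmap : (gaussianReal 0 v).map (fun x : ℝ => -1 * x) = gaussianReal 0 v := by
    rw [gaussianReal_map_const_mul (-1)]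
    norm_num
  have h := integral_map (μ := gaussianReal 0 v) (f := fun x : ℝ => x)
    (φ := fun x : ℝ => -1 * x)
    (measurable_id.const_mul (-1)).aemeasurable aestronglyMeasurable_id
  rw [hmap] at h
  have h2 : ∫ x, (-1:ℝ) * x ∂(gaussianReal 0 v) = - ∫ x, x ∂(gaussianReal 0 v) := by
    rw [integral_const_mul]; ring
  rw [h2] at h
  linarith

lemma gauss_integrable_sq (v : ℝ≥0) :
    Integrable (fun x => x ^ 2) (gaussianReal 0 v) := by
  by_cases hv : v = 0
  · rw [hv, gaussianReal_zero_var]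
    refine ⟨(measurable_id.pow_const 2).aestronglyMeasurable, ?_⟩
    simp [HasFiniteIntegral, lintegral_dirac]
  rw [gaussianReal_of_var_ne_zero _ hv]
  have hpdf : (gaussianPDF 0 v) = fun x => ((Real.toNNReal (gaussianPDFReal 0 v x) : ℝ≥0) : ℝ≥0∞) := rfl
  rw [hpdf, integrable_withDensity_iff_integrable_smul
    (measurable_gaussianPDFReal 0 v).real_toNNReal]
  have hb : (0:ℝ) < (2 * (v:ℝ))⁻¹ := by positivity
  have : Integrable (fun x : ℝ => (Real.sqrt (2 * π * v))⁻¹ * (x ^ 2 * rexp (-(2 * (v:ℝ))⁻¹ * x ^ 2))) := by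
    have hint : Integrable (fun x : ℝ => x ^ 2 * rexp (-(2 * (v:ℝ))⁻¹ * x ^ 2)) := by
      have := integrable_rpow_mul_exp_neg_mul_sq hb (s := 2) (by norm_num)
      have h2 : ∀ x : ℝ, x ^ (2:ℝ) = x ^ 2 := fun x => by
        rw [show (2:ℝ) = ((2:ℕ):ℝ) by norm_num, Real.rpow_natCast]
      simpa only [h2] using this
    exact hint.const_mul _
  refine this.congr (Eventually.of_forall fun x => ?_)
  simp only [NNReal.smul_def, smul_eq_mul]
  rw [Real.coe_toNNReal _ (gaussianPDFReal_nonneg _ _ _), gauss_pdf_eq]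
  ring

lemma gauss_memLp2 (v : ℝ≥0) : MemLp (fun x : ℝ => x) 2 (gaussianReal 0 v) := by
  refine (memLp_two_iff_integrable_sq aestronglyMeasurable_id).mpr ?_
  exact gauss_integrable_sq v


end GaussAux

/-- Covariance of `W_c(t)`:
`E[⟪a, W_c(t)⟫ ⟪b, W_c(t)⟫] = t * ∑' j, ⟪a, J gⱼ⟫ ⟪b, J gⱼ⟫ = t * ⟪(J ∘ J*) a, b⟫`;
in particular the covariance operator of `W_c(1)` is `Q₁ = J ∘ J*`. -/
theorem stmt4
    {Ω : Type*} [MeasurableSpace Ω] (P : Measure Ω) [IsProbabilityMeasure P]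
    {U₀ U₁ : Type*}
    [NormedAddCommGroup U₀] [InnerProductSpace ℝ U₀] [CompleteSpace U₀]
    [SecondCountableTopology U₀]
    [NormedAddCommGroup U₁] [InnerProductSpace ℝ U₁] [CompleteSpace U₁]
    [SecondCountableTopology U₁]
    (g : HilbertBasis ℕ ℝ U₀) (J : U₀ →L[ℝ] U₁) (hJinj : Function.Injective J)
    (hJHS : Summable fun j => ‖J (g j)‖ ^ 2)
    (β : ℕ → ℝ → Ω → ℝ) (hβ : IsBMFamily P β)
    (W : ℝ → Ω → U₁)
    (hW : ∀ t, 0 ≤ t → MemLp (W t) 2 P ∧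
      Tendsto (fun m => ∫ ω, ‖(∑ j ∈ Finset.range m, β j t ω • J (g j)) - W t ω‖ ^ 2 ∂P)
        atTop (𝓝 0))
    (t : ℝ) (ht : 0 ≤ t) (a b : U₁) :
    ∫ ω, ⟪a, W t ω⟫ * ⟪b, W t ω⟫ ∂P
        = t * ∑' j, ⟪a, J (g j)⟫ * ⟪b, J (g j)⟫ ∧
    ∫ ω, ⟪a, W t ω⟫ * ⟪b, W t ω⟫ ∂P
        = t * ⟪(J.comp (ContinuousLinearMap.adjoint J)) a, b⟫ := by
  obtain ⟨hWmem, hWconv⟩ := hW t ht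
  set X : ℕ → Ω → ℝ := fun j ω => β j t ω with hX
  have hXmeas : ∀ j, Measurable (X j) := fun j => hβ.meas j t
  have hlaw : ∀ j, P.map (X j) = gaussianReal 0 t.toNNReal := by
    intro j
    have h := hβ.incr_law j 0 t le_rfl ht
    have he : (fun ω => β j t ω - β j 0 ω) = X j := by
      funext ω; rw [hβ.start j ω, sub_zero]
    rw [he, sub_zero] at h
    exact h
  have hXmem : ∀ j, MemLp (X j) 2 P := by
    intro j
    have h := gauss_memLp2 t.toNNReal
    rw [← hlaw j] at h
    exact (memLp_map_measure_iff aestronglyMeasurable_id (hXmeas j).aemeasurable).mp h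
  have hXmean : ∀ j, ∫ ω, X j ω ∂P = 0 := by
    intro j
    have h := integral_map (μ := P) (f := fun x : ℝ => x) (hXmeas j).aemeasurable
      aestronglyMeasurable_id
    rw [hlaw j, gauss_mean t.toNNReal] at h
    exact h.symm
  have hXsq : ∀ j, ∫ ω, X j ω * X j ω ∂P = t := by
    intro j
    have h := integral_map (μ := P) (f := fun x : ℝ => x ^ 2) (hXmeas j).aemeasurable
      (measurable_id.pow_const 2).aestronglyMeasurable
    rw [hlaw j, gauss_moment2 t.toNNReal, Real.coe_toNNReal t ht] at h
    simp only [pow_two] at h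
    exact h.symm
  have hXcross : ∀ j k, j ≠ k → ∫ ω, X j ω * X k ω ∂P = 0 := by
    intro j k hjk
    have hind : IndepFun (X j) (X k) P := by
      have h := hβ.indep.indepFun hjk
      exact h.comp (measurable_pi_apply t) (measurable_pi_apply t)
    have h := hind.integral_mul_eq_mul_integral (hXmeas j).aestronglyMeasurable
      (hXmeas k).aestronglyMeasurable
    calc ∫ ω, X j ω * X k ω ∂P = ∫ ω, (X j * X k) ω ∂P := rfl
      _ = (∫ ω, X j ω ∂P) * ∫ ω, X k ω ∂P := h
      _ = 0 := by rw [hXmean j, hXmean k]; ring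
  have hmul_int : ∀ (f h : Ω → ℝ), MemLp f 2 P → MemLp h 2 P →
      Integrable (fun ω => f ω * h ω) P := by
    intro f h hf hh
    have := hh.smul (φ := f) (r := 1) hf
    rw [← memLp_one_iff_integrable]
    exact this
  have hX2int : ∀ j k, Integrable (fun ω => X j ω * X k ω) P :=
    fun j k => hmul_int _ _ (hXmem j) (hXmem k)
  have hXprod : ∀ j k, ∫ ω, X j ω * X k ω ∂P = if j = k then t else 0 := by
    intro j k
    by_cases h : j = k
    · subst h; simp [hXsq j]
    · simp [h, hXcross j k h]
  -- the partial sums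
  set S : ℕ → Ω → U₁ := fun m ω => ∑ j ∈ Finset.range m, X j ω • J (g j) with hS
  set c : ℕ → ℝ := fun j => ⟪a, J (g j)⟫ with hc
  set d : ℕ → ℝ := fun j => ⟪b, J (g j)⟫ with hd
  have hinner : ∀ (u : U₁) m ω,
      ⟪u, S m ω⟫ = ∑ j ∈ Finset.range m, ⟪u, J (g j)⟫ * X j ω := by
    intro u m ω
    rw [hS, inner_sum]
    exact Finset.sum_congr rfl fun j _ => by rw [real_inner_smul_right]; ring
  have hSmem : ∀ m, MemLp (S m) 2 P := by
    intro m
    refine memLp_finset_sum _ fun j _ => ?_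
    have := (memLp_const (μ := P) (p := ⊤) (c := J (g j))).smul (φ := X j)
      (p := 2) (r := 2) (hXmem j)
    exact this
  have hFm : ∀ m, ∫ ω, ⟪a, S m ω⟫ * ⟪b, S m ω⟫ ∂P
      = t * ∑ j ∈ Finset.range m, c j * d j := by
    intro m
    have hpt : ∀ ω, ⟪a, S m ω⟫ * ⟪b, S m ω⟫
        = ∑ j ∈ Finset.range m, ∑ k ∈ Finset.range m,
            (c j * d k) * (X j ω * X k ω) := by
      intro ω
      rw [hinner a m ω, hinner b m ω, Finset.sum_mul_sum]
      exact Finset.sum_congr rfl fun j _ => Finset.sum_congr rfl fun k _ => by ring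
    simp only [hpt]
    rw [integral_finset_sum _ fun j _ => integrable_finset_sum _
      fun k _ => (hX2int j k).const_mul _]
    have : ∀ j ∈ Finset.range m,
        ∫ ω, ∑ k ∈ Finset.range m, (c j * d k) * (X j ω * X k ω) ∂P
        = t * (c j * d j) := by
      intro j hj
      rw [integral_finset_sum _ fun k _ => (hX2int j k).const_mul _]
      have : ∀ k ∈ Finset.range m,
          ∫ ω, (c j * d k) * (X j ω * X k ω) ∂P
          = if j = k then c j * d j * t else 0 := by
        intro k _
        rw [integral_const_mul, hXprod j k]
        by_cases h : j = k
        · subst h; simp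
        · simp [h]
      rw [Finset.sum_congr rfl this, Finset.sum_ite_eq (Finset.range m) j
        (fun k => c j * d j * t), if_pos hj]
      ring
    rw [Finset.sum_congr rfl this, ← Finset.mul_sum]
  -- summability of the coefficient products
  have hcd_bound : ∀ j, ‖c j * d j‖ ≤ (‖a‖ * ‖b‖) * ‖J (g j)‖ ^ 2 := by
    intro j
    have h1 := abs_real_inner_le_norm a (J (g j))
    have h2 := abs_real_inner_le_norm b (J (g j))
    rw [Real.norm_eq_abs, abs_mul]
    calc |c j| * |d j| ≤ (‖a‖ * ‖J (g j)‖) * (‖b‖ * ‖J (g j)‖) :=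
          mul_le_mul h1 h2 (abs_nonneg _) (by positivity)
      _ = (‖a‖ * ‖b‖) * ‖J (g j)‖ ^ 2 := by ring
  have hsum : Summable fun j => c j * d j := by
    refine Summable.of_norm (Summable.of_nonneg_of_le (fun j => norm_nonneg _)
      hcd_bound ?_)
    exact hJHS.mul_left _
  -- identification of the tsum with the adjoint
  have htsum : ∑' j, c j * d j
      = ⟪(J.comp (ContinuousLinearMap.adjoint J)) a, b⟫ := by
    have h1 : ∀ j, c j * d j
        = ⟪(ContinuousLinearMap.adjoint J) a, g j⟫ * ⟪g j, (ContinuousLinearMap.adjoint J) b⟫ := by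
      intro j
      have e1 : ⟪(ContinuousLinearMap.adjoint J) a, g j⟫ = c j :=
        ContinuousLinearMap.adjoint_inner_left J (g j) a
      have e2 : ⟪g j, (ContinuousLinearMap.adjoint J) b⟫ = d j := by
        rw [ContinuousLinearMap.adjoint_inner_right J (g j) b]
        exact real_inner_comm _ _
      rw [e1, e2]
    rw [tsum_congr h1, g.tsum_inner_mul_inner]
    rw [ContinuousLinearMap.comp_apply]
    exact ContinuousLinearMap.adjoint_inner_right J _ b
  -- convergence of the integrals
  set Y : Ω → ℝ := fun ω => ⟪a, W t ω⟫ with hY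
  set Z : Ω → ℝ := fun ω => ⟪b, W t ω⟫ with hZ
  have hYmem : MemLp Y 2 P := hWmem.const_inner a
  have hZmem : MemLp Z 2 P := hWmem.const_inner b
  have hDmem : ∀ m, MemLp (fun ω => S m ω - W t ω) 2 P :=
    fun m => (hSmem m).sub hWmem
  have hYmmem : ∀ m, MemLp (fun ω => ⟪a, S m ω⟫) 2 P :=
    fun m => (hSmem m).const_inner a
  have hZmmem : ∀ m, MemLp (fun ω => ⟪b, S m ω⟫) 2 P :=
    fun m => (hSmem m).const_inner b
  -- Hölder bound
  have holder : ∀ (f h : Ω → U₁), MemLp f 2 P → MemLp h 2 P →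
      ∫ ω, ‖f ω‖ * ‖h ω‖ ∂P
        ≤ (∫ ω, ‖f ω‖ ^ 2 ∂P) ^ ((1:ℝ)/2) * (∫ ω, ‖h ω‖ ^ 2 ∂P) ^ ((1:ℝ)/2) := by
    intro f h hf hh
    have hconj : (2:ℝ).HolderConjugate 2 := Real.HolderConjugate.two_two
    have h2 : ENNReal.ofReal (2:ℝ) = 2 := by norm_num
    have := integral_mul_norm_le_Lp_mul_Lq (μ := P) hconj (h2 ▸ hf) (h2 ▸ hh)
    have hrpow : ∀ x : ℝ, x ^ (2:ℝ) = x ^ 2 := fun x => by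
      rw [show (2:ℝ) = ((2:ℕ):ℝ) by norm_num, Real.rpow_natCast]
    simpa only [hrpow] using this
  set δ : ℕ → ℝ := fun m => ∫ ω, ‖S m ω - W t ω‖ ^ 2 ∂P with hδdef
  have hδ0 : ∀ m, 0 ≤ δ m := fun m => integral_nonneg fun ω => by positivity
  have hδto : Tendsto δ atTop (𝓝 0) := hWconv
  set C : ℝ := (∫ ω, ‖W t ω‖ ^ 2 ∂P) ^ ((1:ℝ)/2) with hCdef
  have hC0 : 0 ≤ C := Real.rpow_nonneg (integral_nonneg fun ω => by positivity) _
  have hεto : Tendsto (fun m => (δ m) ^ ((1:ℝ)/2)) atTop (𝓝 0) := by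
    have hcont : ContinuousAt (fun x : ℝ => x ^ ((1:ℝ)/2)) 0 :=
      Real.continuousAt_rpow_const 0 _ (Or.inr (by norm_num))
    have := hcont.tendsto.comp hδto
    simpa [Function.comp_def, Real.zero_rpow (by norm_num : ((1:ℝ)/2) ≠ 0)] using this
  -- integrability of the products
  have hint_mm : ∀ m, Integrable (fun ω => ⟪a, S m ω⟫ * ⟪b, S m ω⟫) P :=
    fun m => hmul_int _ _ (hYmmem m) (hZmmem m)
  have hint_YZ : Integrable (fun ω => Y ω * Z ω) P := hmul_int _ _ hYmem hZmem
  -- the key bound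
  have hbound : ∀ m, |(∫ ω, ⟪a, S m ω⟫ * ⟪b, S m ω⟫ ∂P) - ∫ ω, Y ω * Z ω ∂P|
      ≤ ‖a‖ * ‖b‖ * (δ m + 2 * ((δ m) ^ ((1:ℝ)/2) * C)) := by
    intro m
    have hDnorm : MemLp (fun ω => ‖S m ω - W t ω‖) 2 P := (hDmem m).norm
    have hWnorm : MemLp (fun ω => ‖W t ω‖) 2 P := hWmem.norm
    have hintD2 : Integrable (fun ω => ‖S m ω - W t ω‖ ^ 2) P := by
      have := hmul_int _ _ hDnorm hDnorm
      simpa [pow_two] using this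
    have hintDW : Integrable (fun ω => ‖S m ω - W t ω‖ * ‖W t ω‖) P :=
      hmul_int _ _ hDnorm hWnorm
    have hG : Integrable (fun ω => ‖a‖ * ‖b‖ *
        (‖S m ω - W t ω‖ ^ 2 + 2 * (‖S m ω - W t ω‖ * ‖W t ω‖))) P :=
      ((hintD2.add (hintDW.const_mul 2)).const_mul _)
    have hptw : ∀ ω, |⟪a, S m ω⟫ * ⟪b, S m ω⟫ - Y ω * Z ω|
        ≤ ‖a‖ * ‖b‖ * (‖S m ω - W t ω‖ ^ 2 + 2 * (‖S m ω - W t ω‖ * ‖W t ω‖)) := by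
      intro ω
      set u := S m ω - W t ω with hu
      have e1 : ⟪a, S m ω⟫ - Y ω = ⟪a, u⟫ := by rw [hY]; rw [← inner_sub_right]
      have e2 : ⟪b, S m ω⟫ - Z ω = ⟪b, u⟫ := by rw [hZ]; rw [← inner_sub_right]
      have key : ⟪a, S m ω⟫ * ⟪b, S m ω⟫ - Y ω * Z ω
          = ⟪a, u⟫ * ⟪b, u⟫ + ⟪a, u⟫ * Z ω + Y ω * ⟪b, u⟫ := by
        rw [← e1, ← e2]; ring
      have b1 : |⟪a, u⟫| ≤ ‖a‖ * ‖u‖ := abs_real_inner_le_norm a u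
      have b2 : |⟪b, u⟫| ≤ ‖b‖ * ‖u‖ := abs_real_inner_le_norm b u
      have b3 : |Y ω| ≤ ‖a‖ * ‖W t ω‖ := abs_real_inner_le_norm a (W t ω)
      have b4 : |Z ω| ≤ ‖b‖ * ‖W t ω‖ := abs_real_inner_le_norm b (W t ω)
      calc |⟪a, S m ω⟫ * ⟪b, S m ω⟫ - Y ω * Z ω|
          ≤ |⟪a, u⟫ * ⟪b, u⟫| + |⟪a, u⟫ * Z ω| + |Y ω * ⟪b, u⟫| := by
            rw [key]; exact (abs_add_le _ _).trans (by gcongr; exact abs_add_le _ _)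
        _ = |⟪a, u⟫| * |⟪b, u⟫| + |⟪a, u⟫| * |Z ω| + |Y ω| * |⟪b, u⟫| := by
            rw [abs_mul, abs_mul, abs_mul]
        _ ≤ (‖a‖ * ‖u‖) * (‖b‖ * ‖u‖) + (‖a‖ * ‖u‖) * (‖b‖ * ‖W t ω‖)
            + (‖a‖ * ‖W t ω‖) * (‖b‖ * ‖u‖) := by
            gcongr <;> first
              | exact abs_nonneg _
              | positivity
              | assumption
        _ = ‖a‖ * ‖b‖ * (‖u‖ ^ 2 + 2 * (‖u‖ * ‖W t ω‖)) := by ring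
    have hsub : (∫ ω, ⟪a, S m ω⟫ * ⟪b, S m ω⟫ ∂P) - ∫ ω, Y ω * Z ω ∂P
        = ∫ ω, (⟪a, S m ω⟫ * ⟪b, S m ω⟫ - Y ω * Z ω) ∂P :=
      (integral_sub (hint_mm m) hint_YZ).symm
    rw [hsub]
    calc |∫ ω, (⟪a, S m ω⟫ * ⟪b, S m ω⟫ - Y ω * Z ω) ∂P|
        ≤ ∫ ω, |⟪a, S m ω⟫ * ⟪b, S m ω⟫ - Y ω * Z ω| ∂P := by
          simpa [Real.norm_eq_abs] using
            norm_integral_le_integral_norm (μ := P)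
              (f := fun ω => ⟪a, S m ω⟫ * ⟪b, S m ω⟫ - Y ω * Z ω)
      _ ≤ ∫ ω, ‖a‖ * ‖b‖ *
            (‖S m ω - W t ω‖ ^ 2 + 2 * (‖S m ω - W t ω‖ * ‖W t ω‖)) ∂P := by
          refine integral_mono_of_nonneg (Eventually.of_forall fun ω => abs_nonneg _)
            hG (Eventually.of_forall fun ω => hptw ω)
      _ = ‖a‖ * ‖b‖ * (δ m + 2 * ∫ ω, ‖S m ω - W t ω‖ * ‖W t ω‖ ∂P) := by
          rw [integral_const_mul, integral_add hintD2 (hintDW.const_mul 2),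
            integral_const_mul]
      _ ≤ ‖a‖ * ‖b‖ * (δ m + 2 * ((δ m) ^ ((1:ℝ)/2) * C)) := by
          gcongr
          exact holder _ _ (hDmem m) hWmem
  -- conclude by uniqueness of limits
  have hto0 : Tendsto (fun m => ‖a‖ * ‖b‖ * (δ m + 2 * ((δ m) ^ ((1:ℝ)/2) * C)))
      atTop (𝓝 0) := by
    have : Tendsto (fun m => δ m + 2 * ((δ m) ^ ((1:ℝ)/2) * C)) atTop (𝓝 0) := by
      have h2 := ((hεto.mul_const C).const_mul 2)
      have := hδto.add h2
      simpa using this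
    simpa using this.const_mul (‖a‖ * ‖b‖)
  have hFto : Tendsto (fun m => ∫ ω, ⟪a, S m ω⟫ * ⟪b, S m ω⟫ ∂P) atTop
      (𝓝 (∫ ω, Y ω * Z ω ∂P)) := by
    rw [tendsto_iff_dist_tendsto_zero]
    refine squeeze_zero (fun m => dist_nonneg) (fun m => ?_) hto0
    rw [Real.dist_eq]
    exact hbound m
  have hFto' : Tendsto (fun m => ∫ ω, ⟪a, S m ω⟫ * ⟪b, S m ω⟫ ∂P) atTop
      (𝓝 (t * ∑' j, c j * d j)) := by
    have := (hsum.hasSum.tendsto_sum_nat).const_mul t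
    simp only [hFm]
    exact this
  have hmain : ∫ ω, Y ω * Z ω ∂P = t * ∑' j, c j * d j :=
    tendsto_nhds_unique hFto hFto'
  refine ⟨hmain, ?_⟩
  rw [hmain, htsum]
end

section
/- Let J : U₀ → U₁ be an injective bounded linear operator between real Hilbert spaces and let Q₁ = J ∘ J*. Then there exists a linear isometry G : U₀ → U₁ such that Q₁^{1/2} ∘ G = J; consequently, for every u in U₀ (identified with its image J u in Im(Q₁^{1/2})), the norm ‖u‖_{U₀} equals ‖Q₁^{-1/2}(J u)‖_{U₁}, where Q₁^{-1/2}(J u) denotes the unique preimage of J u under Q₁^{1/2} lying in the orthogonal complement of the kernel of Q₁^{1/2}. -/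
open scoped RealInnerProductSpace

/-- For an injective bounded operator `J : U₀ → U₁` between real Hilbert spaces,
with `Q₁ = J ∘ J*` and `R = Q₁^{1/2}` its non-negative self-adjoint square root,
there exists a linear isometry `G : U₀ → U₁` with `Q₁^{1/2} ∘ G = J`; consequently,
for every `u ∈ U₀`, `‖u‖_{U₀} = ‖Q₁^{-1/2}(J u)‖_{U₁}`, where `Q₁^{-1/2}(J u)` is
the unique preimage of `J u` under `Q₁^{1/2}` lying in `(ker Q₁^{1/2})ᗮ`. -/
theorem stmt11
    {U₀ U₁ : Type*}
    [NormedAddCommGroup U₀] [InnerProductSpace ℝ U₀] [CompleteSpace U₀]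
    [NormedAddCommGroup U₁] [InnerProductSpace ℝ U₁] [CompleteSpace U₁]
    (J : U₀ →L[ℝ] U₁) (hJinj : Function.Injective J)
    (R : U₁ →L[ℝ] U₁) (hRsa : IsSelfAdjoint R) (hRnn : ∀ x : U₁, 0 ≤ ⟪R x, x⟫)
    (hRsq : R.comp R = J.comp (ContinuousLinearMap.adjoint J)) :
    (∃ G : U₀ →ₗᵢ[ℝ] U₁, ∀ u : U₀, R (G u) = J u) ∧
    ∀ (u : U₀) (v : U₁), R v = J u → v ∈ (LinearMap.ker (R : U₁ →ₗ[ℝ] U₁))ᗮ → ‖u‖ = ‖v‖ := by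
  set Jadj := ContinuousLinearMap.adjoint J with hJadj
  have hRR : ∀ x, R (R x) = J (Jadj x) := fun x =>
    congrFun (congrArg DFunLike.coe hRsq) x
  have hRadj : ContinuousLinearMap.adjoint R = R := hRsa
  -- key norm identity
  have hnorm : ∀ x : U₁, ‖R x‖ = ‖Jadj x‖ := by
    intro x
    have h1 : ⟪R x, R x⟫ = ⟪Jadj x, Jadj x⟫ := by
      calc ⟪R x, R x⟫ = ⟪x, R (R x)⟫ := by
            conv_lhs => rw [← hRadj]
            rw [ContinuousLinearMap.adjoint_inner_left, hRadj]
        _ = ⟪Jadj x, Jadj x⟫ := by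
            rw [hRR, hJadj, ContinuousLinearMap.adjoint_inner_left]
    have := congrArg Real.sqrt h1
    rwa [real_inner_self_eq_norm_mul_norm, real_inner_self_eq_norm_mul_norm,
      Real.sqrt_mul_self (norm_nonneg _), Real.sqrt_mul_self (norm_nonneg _)] at this
  have hkey : ∀ x y : U₁, Jadj x = Jadj y → R x = R y := by
    intro x y h
    have : ‖R x - R y‖ = 0 := by
      rw [← map_sub, hnorm, map_sub, h, sub_self, norm_zero]
    exact sub_eq_zero.mp (norm_eq_zero.mp this)
  set p : Submodule ℝ U₀ := LinearMap.range (Jadj : U₁ →ₗ[ℝ] U₀) with hp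
  -- the isometry on p
  have hchoose : ∀ z : p, Jadj (z.2.choose) = (z : U₀) := fun z => z.2.choose_spec
  let f : p →ₗ[ℝ] U₁ :=
    { toFun := fun z => R (z.2.choose)
      map_add' := by
        intro z w
        show R _ = R _ + R _
        rw [← map_add]
        exact hkey _ _ (by rw [map_add, hchoose, hchoose, hchoose]; rfl)
      map_smul' := by
        intro c z
        show R _ = c • R _
        rw [← map_smul]
        exact hkey _ _ (by rw [map_smul, hchoose, hchoose]; rfl) }
  have hf : ∀ z : p, ‖f z‖ = ‖z‖ := by
    intro z
    show ‖R (z.2.choose)‖ = ‖z‖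
    rw [hnorm, hchoose]
    rfl
  have hfR : ∀ z : p, R (f z) = J (z : U₀) := by
    intro z
    show R (R (z.2.choose)) = J (z : U₀)
    rw [hRR, hchoose]
  have hfmem : ∀ z : p, f z ∈ (LinearMap.ker (R : U₁ →ₗ[ℝ] U₁))ᗮ := by
    intro z
    rw [Submodule.mem_orthogonal]
    intro w hw
    show ⟪w, R (z.2.choose)⟫ = 0
    rw [real_inner_comm, ← hRadj, ContinuousLinearMap.adjoint_inner_left,
      (show R w = 0 from LinearMap.mem_ker.mp hw), inner_zero_right]
  let fc : p →L[ℝ] U₁ := f.mkContinuous 1 (fun z => by rw [hf, one_mul])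
  have hfc : ∀ z : p, fc z = f z := fun z => rfl
  -- density of p
  have hdense : DenseRange (p.subtypeL : p →L[ℝ] U₀) := by
    have horth : pᗮ = ⊥ := by
      rw [Submodule.eq_bot_iff]
      intro u hu
      have := (Submodule.mem_orthogonal _ _).mp hu (Jadj (J u)) ⟨J u, rfl⟩
      rw [hJadj, ContinuousLinearMap.adjoint_inner_left] at this
      exact hJinj (by rw [map_zero]; exact inner_self_eq_zero.mp this)
    have : p.topologicalClosure = ⊤ := by
      rw [← Submodule.orthogonal_orthogonal_eq_closure, horth, Submodule.bot_orthogonal_eq_top]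
    have hd : Dense (p : Set U₀) := Submodule.dense_iff_topologicalClosure_eq_top.mpr this
    have hr : Set.range (⇑(p.subtypeL : p →L[ℝ] U₀)) = (p : Set U₀) := Subtype.range_coe
    rw [DenseRange, hr]
    exact hd
  have hind : IsUniformInducing (p.subtypeL : p →L[ℝ] U₀) :=
    (isometry_subtype_coe).isUniformInducing
  let G' : U₀ →L[ℝ] U₁ := fc.extend p.subtypeL
  have hG'e : ∀ z : p, G' (p.subtypeL z) = f z := fun z =>
    ContinuousLinearMap.extend_eq (f := fc) (e := p.subtypeL) hdense hind z
  have hG'norm : ∀ u : U₀, ‖G' u‖ = ‖u‖ := by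
    intro u
    refine hdense.induction_on u (isClosed_eq (continuous_norm.comp G'.continuous)
      continuous_norm) ?_
    intro z
    rw [hG'e, hf]
    rfl
  have hG'R : ∀ u : U₀, R (G' u) = J u := by
    intro u
    refine hdense.induction_on u (isClosed_eq (R.continuous.comp G'.continuous)
      J.continuous) ?_
    intro z
    rw [hG'e, hfR]
    rfl
  have hG'mem : ∀ u : U₀, G' u ∈ (LinearMap.ker (R : U₁ →ₗ[ℝ] U₁))ᗮ := by
    intro u
    refine hdense.induction_on u ?_ ?_
    · exact IsClosed.preimage G'.continuous (Submodule.isClosed_orthogonal _)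
    · intro z
      rw [hG'e]
      exact hfmem z
  constructor
  · exact ⟨⟨G'.toLinearMap, hG'norm⟩, hG'R⟩
  · intro u v hRv hvmem
    have hdiff : v - G' u = 0 := by
      have h1 : v - G' u ∈ LinearMap.ker (R : U₁ →ₗ[ℝ] U₁) := by
        rw [LinearMap.mem_ker]
        show R (v - G' u) = 0
        rw [map_sub, hRv, hG'R, sub_self]
      have h2 : v - G' u ∈ (LinearMap.ker (R : U₁ →ₗ[ℝ] U₁))ᗮ :=
        Submodule.sub_mem _ hvmem (hG'mem u)
      exact (Submodule.mem_bot ℝ).mp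
        ((LinearMap.ker (R : U₁ →ₗ[ℝ] U₁)).orthogonal_disjoint.eq_bot ▸ Submodule.mem_inf.mpr ⟨h1, h2⟩)
    have : v = G' u := sub_eq_zero.mp hdiff
    rw [this, hG'norm]
end
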